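/- arXiv:2108.12153 — 4 statements merged into one kernel-verified Lean document; each statement's English description precedes it below -/
import Mathlib

section
/- Let D₁ ∈ B(H₁), D₂ ∈ B(H₂). If there exists A ∈ B(H₂, H₁) such that the operator matrix [[D₁, A],[0, D₂]] is left invertible on H₁ ⊕ H₂, then D₁ is left invertible and α(D₂) ≤ β(D₁). -/
open ContinuousLinearMap in
/-- The upper triangular operator matrix `[[D₁, A],[0, D₂]]` acting on `H₁ × H₂`. -/
noncomputable def upperTriangular {H₁ H₂ : Type*} [NormedAddCommGroup H₁] [NormedAddCommGroup H₂]
    [NormedSpace ℂ H₁] [NormedSpace ℂ H₂]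
    (D₁ : H₁ →L[ℂ] H₁) (D₂ : H₂ →L[ℂ] H₂) (A : H₂ →L[ℂ] H₁) :
    (H₁ × H₂) →L[ℂ] (H₁ × H₂) :=
  (D₁.comp (fst ℂ H₁ H₂) + A.comp (snd ℂ H₁ H₂)).prod (D₂.comp (snd ℂ H₁ H₂))

universe u v

variable {H₁ : Type u} {H₂ : Type v} [NormedAddCommGroup H₁] [InnerProductSpace ℂ H₁] [CompleteSpace H₁]
  [NormedAddCommGroup H₂] [InnerProductSpace ℂ H₂] [CompleteSpace H₂]

/-- If some completion `[[D₁, A],[0, D₂]]` is left invertible, then `D₁` is left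
invertible and `α(D₂) ≤ β(D₁)`. -/
theorem stmt8 (D₁ : H₁ →L[ℂ] H₁) (D₂ : H₂ →L[ℂ] H₂)
    (h : ∃ A : H₂ →L[ℂ] H₁, ∃ S : (H₁ × H₂) →L[ℂ] (H₁ × H₂),
      S.comp (upperTriangular D₁ D₂ A) = ContinuousLinearMap.id ℂ (H₁ × H₂)) :
    (∃ S : H₁ →L[ℂ] H₁, S.comp D₁ = ContinuousLinearMap.id ℂ H₁) ∧
      Cardinal.lift.{u} (Module.rank ℂ (LinearMap.ker (D₂ : H₂ →ₗ[ℂ] H₂))) ≤ Cardinal.lift.{v} (Module.rank ℂ ((LinearMap.range (D₁ : H₁ →ₗ[ℂ] H₁))ᗮ)) := by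
  obtain ⟨A, S, hS⟩ := h
  set T := upperTriangular D₁ D₂ A with hT
  have hST : ∀ z, S (T z) = z := fun z => congrArg (fun f => f z) hS
  have hTapp : ∀ (x : H₁) (y : H₂), T (x, y) = (D₁ x + A y, D₂ y) := fun x y => rfl
  set S₁ : H₁ →L[ℂ] H₁ :=
    (ContinuousLinearMap.fst ℂ H₁ H₂).comp (S.comp (ContinuousLinearMap.inl ℂ H₁ H₂)) with hS₁
  have hleft : ∀ x, S₁ (D₁ x) = x := by
    intro x
    have h1 : T (x, 0) = (D₁ x, (0 : H₂)) := by rw [hTapp]; simp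
    have h2 := hST (x, 0)
    rw [h1] at h2
    simpa [hS₁] using congrArg Prod.fst h2
  refine ⟨⟨S₁, by ext x; exact hleft x⟩, ?_⟩
  have hanti : AntilipschitzWith ‖S₁‖₊ D₁ :=
    AddMonoidHomClass.antilipschitz_of_bound D₁ (fun x => by
      calc ‖x‖ = ‖S₁ (D₁ x)‖ := by rw [hleft]
        _ ≤ ‖S₁‖ * ‖D₁ x‖ := S₁.le_opNorm _)
  have hclosed : IsClosed (LinearMap.range (D₁ : H₁ →ₗ[ℂ] H₁) : Set H₁) := by
    have := hanti.isClosed_range D₁.uniformContinuous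
    rwa [LinearMap.coe_range]
  haveI : CompleteSpace (LinearMap.range (D₁ : H₁ →ₗ[ℂ] H₁)) := hclosed.completeSpace_coe
  haveI : CompleteSpace ((LinearMap.range (D₁ : H₁ →ₗ[ℂ] H₁))ᗮ : Submodule ℂ H₁) :=
    (LinearMap.range (D₁ : H₁ →ₗ[ℂ] H₁)).isClosed_orthogonal.completeSpace_coe
  set P := Submodule.orthogonalProjectionOnto ((LinearMap.range (D₁ : H₁ →ₗ[ℂ] H₁))ᗮ) with hP
  set f : (LinearMap.ker (D₂ : H₂ →ₗ[ℂ] H₂)) →ₗ[ℂ] ((LinearMap.range (D₁ : H₁ →ₗ[ℂ] H₁))ᗮ) :=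
    (P.toLinearMap).comp (A.toLinearMap.comp (LinearMap.ker (D₂ : H₂ →ₗ[ℂ] H₂)).subtype) with hf
  have hinj : Function.Injective f := by
    rw [← LinearMap.ker_eq_bot, LinearMap.ker_eq_bot']
    intro m hm
    have hm' : P (A m.1) = 0 := hm
    have hmem : A m.1 ∈ ((LinearMap.range (D₁ : H₁ →ₗ[ℂ] H₁))ᗮ)ᗮ := Submodule.orthogonalProjectionOnto_eq_zero_iff.mp hm'
    rw [Submodule.orthogonal_orthogonal] at hmem
    obtain ⟨x, hx⟩ := hmem
    have hz : T (-x, m.1) = 0 := by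
      rw [hTapp]
      have hm2 : D₂ m.1 = 0 := m.2
      have hx' : D₁ x = A m.1 := hx
      simp [hx', hm2]
    have h3 := hST (-x, m.1)
    rw [hz, map_zero] at h3
    have : m.1 = 0 := (Prod.mk.injEq _ _ _ _ ▸ h3.symm).2
    exact Subtype.ext this
  exact LinearMap.lift_rank_le_of_injective f hinj
end

section
/- Let D₁ ∈ B(H₁), D₂ ∈ B(H₂). If there exists A ∈ B(H₂, H₁) such that the operator matrix [[D₁, A],[0, D₂]] is right invertible on H₁ ⊕ H₂, then D₂ is right invertible and β(D₁) ≤ α(D₂). -/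
set_option synthInstance.maxHeartbeats 1000000

universe u v

variable {H₁ : Type u} {H₂ : Type v} [NormedAddCommGroup H₁] [InnerProductSpace ℂ H₁] [CompleteSpace H₁]
  [NormedAddCommGroup H₂] [InnerProductSpace ℂ H₂] [CompleteSpace H₂]

/-- If some completion `[[D₁, A],[0, D₂]]` is right invertible, then `D₂` is right
invertible and `β(D₁) ≤ α(D₂)`. -/
theorem stmt10 (D₁ : H₁ →L[ℂ] H₁) (D₂ : H₂ →L[ℂ] H₂)
    (h : ∃ A : H₂ →L[ℂ] H₁, ∃ S : (H₁ × H₂) →L[ℂ] (H₁ × H₂),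
      (upperTriangular D₁ D₂ A).comp S = ContinuousLinearMap.id ℂ (H₁ × H₂)) :
    (∃ S : H₂ →L[ℂ] H₂, D₂.comp S = ContinuousLinearMap.id ℂ H₂) ∧
      Cardinal.lift.{v} (Module.rank ℂ ((LinearMap.range (D₁ : H₁ →ₗ[ℂ] H₁))ᗮ)) ≤ Cardinal.lift.{u} (Module.rank ℂ (LinearMap.ker (D₂ : H₂ →ₗ[ℂ] H₂))) := by
  obtain ⟨A, S, hS⟩ := h
  have hSapp : ∀ z : H₁ × H₂, upperTriangular D₁ D₂ A (S z) = z := fun z => by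
    have := congrArg (fun T => T z) hS; simpa using this
  have hfst : ∀ z : H₁ × H₂, D₁ (S z).1 + A (S z).2 = z.1 := fun z => by
    have := congrArg Prod.fst (hSapp z)
    simpa [upperTriangular] using this
  have hsnd : ∀ z : H₁ × H₂, D₂ (S z).2 = z.2 := fun z => by
    have := congrArg Prod.snd (hSapp z)
    simpa [upperTriangular] using this
  constructor
  · refine ⟨(ContinuousLinearMap.snd ℂ H₁ H₂).comp
      (S.comp (ContinuousLinearMap.inr ℂ H₁ H₂)), ?_⟩
    ext y
    simpa using hsnd (0, y)
  · set K : Submodule ℂ H₁ := (LinearMap.range (D₁ : H₁ →ₗ[ℂ] H₁))ᗮ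
    haveI : CompleteSpace K := (Submodule.isClosed_orthogonal _).completeSpace_coe
    set P := Submodule.orthogonalProjectionOnto K
    let f : (LinearMap.ker (D₂ : H₂ →ₗ[ℂ] H₂)) →ₗ[ℂ] K :=
      (P.toLinearMap.comp A.toLinearMap).comp (LinearMap.ker (D₂ : H₂ →ₗ[ℂ] H₂)).subtype
    have hsurj : Function.Surjective f := by
      rintro ⟨x, hx⟩
      refine ⟨⟨(S (x, 0)).2, ?_⟩, ?_⟩
      · simpa [LinearMap.mem_ker] using hsnd (x, 0)
      · have h1 : D₁ (S (x, 0)).1 + A (S (x, 0)).2 = x := hfst (x, 0)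
        have hAv : A (S (x, 0)).2 = x - D₁ (S (x, 0)).1 := by
          rw [eq_sub_iff_add_eq']; exact h1
        have hP1 : P (D₁ (S (x, 0)).1) = 0 := by
          rw [Submodule.orthogonalProjectionOnto_eq_zero_iff]
          exact Submodule.le_orthogonal_orthogonal _ ⟨(S (x, 0)).1, rfl⟩
        have hPx : P x = ⟨x, hx⟩ := Subtype.ext (Submodule.starProjection_eq_self_iff.2 hx)
        apply Subtype.ext
        show (P (A (S (x, 0)).2) : H₁) = x
        rw [hAv, map_sub, hP1, hPx]
        simp
    exact f.lift_rank_le_of_surjective hsurj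
end

section
/- Let n ≥ 2 and D_i ∈ B(H_i). If there exist A_{ij} ∈ B(H_j, H_i), 1 ≤ i < j ≤ n, such that the upper triangular operator matrix T with diagonal D₁,...,D_n and upper entries A_{ij} is left invertible on H₁ ⊕ ⋯ ⊕ H_n, then D₁ is left invertible and α(D_i) ≤ β(D₁) + β(D₂) + ⋯ + β(D_{i−1}) for every 2 ≤ i ≤ n. -/
universe u

variable {n : ℕ} {H : Fin n → Type u} [∀ i, NormedAddCommGroup (H i)]
  [∀ i, InnerProductSpace ℂ (H i)] [∀ i, CompleteSpace (H i)]

/-- If some upper triangular completion with diagonal `D₁, …, D_n` is left invertible,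
then `D₁` is left invertible and `α(D_i) ≤ β(D₁) + ⋯ + β(D_{i-1})` for `2 ≤ i ≤ n`. -/
theorem stmt14 (hn : 2 ≤ n) (D : ∀ i, H i →L[ℂ] H i)
    (h : ∃ A : ∀ i j : Fin n, i < j → (H j →L[ℂ] H i),
      ∃ T : (∀ i, H i) →L[ℂ] (∀ i, H i),
        (∀ x : ∀ i, H i, ∀ i : Fin n,
          T x i = D i (x i) + ∑ j : Fin n, if h : i < j then A i j h (x j) else 0) ∧
        ∃ S : (∀ i, H i) →L[ℂ] (∀ i, H i),
          S.comp T = ContinuousLinearMap.id ℂ (∀ i, H i)) :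
    (∃ S : H ⟨0, by omega⟩ →L[ℂ] H ⟨0, by omega⟩,
      S.comp (D ⟨0, by omega⟩) = ContinuousLinearMap.id ℂ (H ⟨0, by omega⟩)) ∧
    ∀ i : Fin n, (i : ℕ) ≠ 0 →
      Module.rank ℂ (LinearMap.ker (D i : H i →ₗ[ℂ] H i)) ≤
        ∑ j ∈ Finset.univ.filter (fun j : Fin n => j < i),
          Module.rank ℂ ((LinearMap.range (D j : H j →ₗ[ℂ] H j))ᗮ) := by
  classical
  obtain ⟨A, T, hT, S, hST⟩ := h
  have hSTapp : ∀ z, S (T z) = z := fun z => by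
    have := DFunLike.congr_fun hST z
    simpa using this
  -- the coordinate inclusions as continuous linear maps
  let sg : ∀ k : Fin n, H k →L[ℂ] (∀ j, H j) := fun k =>
    ⟨LinearMap.single ℂ H k, continuous_single k⟩
  have hsg : ∀ (k : Fin n) (x : H k), sg k x = Pi.single k x := fun _ _ => rfl
  -- action of T on coordinate vectors
  have hTs1 : ∀ (k : Fin n) (x : H k), T (Pi.single k x) k = D k x := by
    intro k x
    rw [hT, Pi.single_eq_same, Finset.sum_eq_zero, add_zero]
    intro j _
    split
    · next hkj => rw [Pi.single_eq_of_ne hkj.ne', map_zero]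
    · rfl
  have hTs2 : ∀ (k : Fin n) (x : H k) (m : Fin n) (hmk : m < k),
      T (Pi.single k x) m = A m k hmk x := by
    intro k x m hmk
    rw [hT, Pi.single_eq_of_ne (by exact fun e => absurd e.symm hmk.ne'), map_zero, zero_add]
    rw [Finset.sum_eq_single_of_mem k (Finset.mem_univ k)]
    · rw [dif_pos hmk, Pi.single_eq_same]
    · intro j _ hj
      split
      · next hmj => rw [Pi.single_eq_of_ne hj, map_zero]
      · rfl
  have hTs3 : ∀ (k : Fin n) (x : H k) (m : Fin n), k < m → T (Pi.single k x) m = 0 := by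
    intro k x m hkm
    rw [hT, Pi.single_eq_of_ne hkm.ne', map_zero, zero_add]
    refine Finset.sum_eq_zero fun j _ => ?_
    split
    · next hmj =>
      rw [Pi.single_eq_of_ne (by exact fun e => absurd (e ▸ hmj) (lt_asymm hkm)), map_zero]
    · rfl
  have h0 : (0 : ℕ) < n := by omega
  constructor
  · -- left invertibility of D₁
    have h1 : ∀ x : H ⟨0, h0⟩, T (Pi.single ⟨0, h0⟩ x) = Pi.single ⟨0, h0⟩ (D ⟨0, h0⟩ x) := by
      intro x
      funext m
      rcases eq_or_ne m ⟨0, h0⟩ with hm | hm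
      · subst hm; rw [hTs1, Pi.single_eq_same]
      · have hm' : (⟨0, h0⟩ : Fin n) < m := by
          rw [Fin.lt_def]
          have := Fin.val_ne_of_ne hm
          simpa using Nat.pos_of_ne_zero (by simpa using this)
        rw [hTs3 _ _ _ hm', Pi.single_eq_of_ne hm]
    refine ⟨(ContinuousLinearMap.proj (⟨0, h0⟩ : Fin n)).comp (S.comp (sg ⟨0, h0⟩)), ?_⟩
    ext x
    simp only [ContinuousLinearMap.comp_apply, ContinuousLinearMap.id_apply,
      ContinuousLinearMap.proj_apply]
    rw [hsg, ← h1, hSTapp, Pi.single_eq_same]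
  · -- the rank inequalities
    intro i hi
    set F := PiLp 2 H with hF
    let eL : F ≃L[ℂ] (∀ j, H j) := PiLp.continuousLinearEquiv 2 ℂ H
    haveI hFc : CompleteSpace F := by
      have h1 : IsUniformEmbedding (eL.toLinearEquiv.toEquiv) :=
        eL.antilipschitz.isUniformEmbedding eL.toContinuousLinearMap.uniformContinuous
      exact (completeSpace_congr h1).mpr inferInstance
    let T₂ : F →L[ℂ] F :=
      ((eL.symm : (∀ j, H j) →L[ℂ] F).comp T).comp (eL : F →L[ℂ] (∀ j, H j))
    have hcoord : ∀ (w : F) (k : Fin n),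
        T₂ w k = D k (w k) + ∑ j : Fin n, if h : k < j then A k j h (w j) else 0 :=
      fun w k => hT (eL w) k
    have hTanti : AntilipschitzWith (‖S‖₊) ⇑T := T.antilipschitz_of_bound fun x => by
      conv_lhs => rw [← hSTapp x]
      exact S.le_opNorm (T x)
    obtain ⟨K, hT₂anti⟩ : ∃ K, AntilipschitzWith K ⇑T₂ :=
      ⟨_, (eL.symm.antilipschitz.comp hTanti).comp eL.antilipschitz⟩
    have hT₂inj : Function.Injective ⇑T₂ := hT₂anti.injective
    -- coordinate evaluations on F
    let evC : ∀ k : Fin n, F →L[ℂ] H k := fun k =>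
      (ContinuousLinearMap.proj k).comp (eL : F →L[ℂ] (∀ j, H j))
    have hevC : ∀ (k : Fin n) (w : F), evC k w = w k := fun _ _ => rfl
    -- the subspace of vectors supported on coordinates < i
    let V : Submodule ℂ F := ⨅ (k : Fin n) (_ : i ≤ k), LinearMap.ker (evC k : F →ₗ[ℂ] H k)
    have hVmem : ∀ w : F, w ∈ V ↔ ∀ k : Fin n, i ≤ k → w k = 0 := by
      intro w
      rw [Submodule.mem_iInf]
      refine forall_congr' fun k => ?_
      rw [Submodule.mem_iInf]
      exact forall_congr' fun hk => LinearMap.mem_ker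
    have hVclosed : IsClosed (V : Set F) := by
      have : (V : Set F) =
          ⋂ (k : Fin n), ⋂ (_ : i ≤ k), (LinearMap.ker (evC k : F →ₗ[ℂ] H k) : Set F) := by
        rw [Submodule.coe_iInf]
        refine Set.iInter_congr fun k => ?_
        rw [Submodule.coe_iInf]
      rw [this]
      exact isClosed_iInter fun k => isClosed_iInter fun _ =>
        ContinuousLinearMap.isClosed_ker (evC k)
    haveI : CompleteSpace V := hVclosed.completeSpace_coe
    let M : Submodule ℂ F := V.map (T₂ : F →ₗ[ℂ] F)
    have hMmem : ∀ y : F, y ∈ M ↔ ∃ w ∈ V, T₂ w = y := by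
      intro y
      simp [M, Submodule.mem_map]
    have hMclosed : IsClosed (M : Set F) := by
      have hMrange : (M : Set F) = Set.range (T₂.comp V.subtypeL) := by
        ext y
        constructor
        · rintro ⟨w, hw, rfl⟩
          exact ⟨⟨w, hw⟩, rfl⟩
        · rintro ⟨⟨w, hw⟩, rfl⟩
          exact ⟨w, hw, rfl⟩
      obtain ⟨K', hManti⟩ : ∃ K', AntilipschitzWith K' ⇑(T₂.comp V.subtypeL) :=
        ⟨_, hT₂anti.comp (V.subtypeₗᵢ.isometry.antilipschitz)⟩
      rw [hMrange]
      exact hManti.isClosed_range (T₂.comp V.subtypeL).uniformContinuous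
    haveI : CompleteSpace M := hMclosed.completeSpace_coe
    have hMV : M ≤ V := by
      rintro y hy
      obtain ⟨w, hw, rfl⟩ := (hMmem y).mp hy
      rw [hVmem]
      intro k hk
      rw [hcoord, (hVmem w).mp hw k hk, map_zero, zero_add]
      refine Finset.sum_eq_zero fun j _ => ?_
      split
      · next hkj => rw [(hVmem w).mp hw j (hk.trans hkj.le), map_zero]
      · rfl
    -- coordinate vectors inside F
    let sgF : ∀ k : Fin n, H k →L[ℂ] F := fun k =>
      (eL.symm : (∀ j, H j) →L[ℂ] F).comp (sg k)
    have hsgF : ∀ (k : Fin n) (x : H k) (m : Fin n), (sgF k x) m = Pi.single k x m :=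
      fun _ _ _ => rfl
    have hTsgF : ∀ (k : Fin n) (x : H k) (m : Fin n), T₂ (sgF k x) m = T (Pi.single k x) m :=
      fun _ _ _ => rfl
    -- the key orthogonality fact
    have hkey : ∀ w : F, w ∈ Mᗮ → w ∈ V → ∀ k : Fin n, k < i →
        (∀ j : Fin n, j < k → w j = 0) → w k ∈ (LinearMap.range (D k : H k →ₗ[ℂ] H k))ᗮ := by
      intro w hwM hwV k hki hwj
      rw [Submodule.mem_orthogonal]
      rintro u ⟨x, rfl⟩
      have hvV : sgF k x ∈ V := by
        rw [hVmem]
        intro m hm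
        have hmk : m ≠ k := fun e => absurd (e ▸ hm) (not_le_of_gt hki)
        rw [hsgF, Pi.single_eq_of_ne hmk]
      have hTv : (inner ℂ (T₂ (sgF k x)) w : ℂ) = 0 :=
        (Submodule.mem_orthogonal M w).mp hwM _ ((hMmem _).mpr ⟨_, hvV, rfl⟩)
      rw [PiLp.inner_apply] at hTv
      have hterm : ∀ m : Fin n,
          (inner ℂ (T₂ (sgF k x) m) (w m) : ℂ) = if m = k then inner ℂ (D k x) (w k) else 0 := by
        intro m
        rcases eq_or_ne m k with hm | hm
        · subst hm
          rw [if_pos rfl, hTsgF, hTs1]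
        · rw [if_neg hm]
          rcases lt_or_gt_of_ne hm with hlt | hgt
          · rw [hwj m hlt, inner_zero_right]
          · rw [hTsgF, hTs3 _ _ _ hgt, inner_zero_left]
      rw [Finset.sum_congr rfl (fun m _ => hterm m)] at hTv
      simpa using hTv
    -- the first injection : ker (D i) ↪ Mᗮ ⊓ V
    let P := Submodule.orthogonalProjection M
    let aL : H i →L[ℂ] F := T₂.comp (sgF i)
    let QL : H i →L[ℂ] F := aL - M.subtypeL.comp (P.comp aL)
    have hQL : ∀ x : H i, QL x = aL x - (P (aL x) : F) := fun x => rfl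
    have haV : ∀ x : H i, x ∈ LinearMap.ker (D i : H i →ₗ[ℂ] H i) → aL x ∈ V := by
      intro x hx
      rw [hVmem]
      intro k hk
      have hk0 : aL x k = T (Pi.single i x) k := rfl
      rw [hk0]
      rcases eq_or_ne k i with hk' | hk'
      · subst hk'
        rw [hTs1]
        exact LinearMap.mem_ker.mp hx
      · have : i < k := lt_of_le_of_ne hk (fun e => hk' e.symm)
        exact hTs3 _ _ _ this
    have hQmem : ∀ x : ↥(LinearMap.ker (D i : H i →ₗ[ℂ] H i)), QL x ∈ Mᗮ ⊓ V := by
      intro x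
      refine Submodule.mem_inf.mpr ⟨?_, ?_⟩
      · rw [hQL]
        exact Submodule.sub_starProjection_mem_orthogonal (K := M) (aL x)
      · rw [hQL]
        exact Submodule.sub_mem V (haV x x.2) (hMV (P (aL x)).2)
    let Φ : ↥(LinearMap.ker (D i : H i →ₗ[ℂ] H i)) →ₗ[ℂ] ↥(Mᗮ ⊓ V) :=
      LinearMap.codRestrict (Mᗮ ⊓ V)
        ((QL : H i →ₗ[ℂ] F).comp (LinearMap.ker (D i : H i →ₗ[ℂ] H i)).subtype) hQmem
    have hΦinj : Function.Injective Φ := by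
      refine (injective_iff_map_eq_zero Φ).mpr fun x hx => ?_
      have hQ0 : QL (x : H i) = 0 := by
        have := congrArg Subtype.val hx
        exact this
      have hmem : aL (x : H i) ∈ M := by
        rw [hQL, sub_eq_zero] at hQ0
        rw [hQ0]
        exact (P (aL (x : H i))).2
      obtain ⟨w, hwV, hw⟩ := (hMmem _).mp hmem
      have hwx : w = sgF i (x : H i) := hT₂inj hw
      have hx0 : (x : H i) = 0 := by
        have h1 : w i = 0 := (hVmem w).mp hwV i le_rfl
        rw [hwx, hsgF, Pi.single_eq_same] at h1
        exact h1
      exact Subtype.ext hx0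
    have rank1 : Module.rank ℂ (LinearMap.ker (D i : H i →ₗ[ℂ] H i)) ≤ Module.rank ℂ ↥(Mᗮ ⊓ V) :=
      Φ.rank_le_of_injective hΦinj
    -- the chain of subspaces
    let Nc : ℕ → Submodule ℂ F := fun c =>
      (Mᗮ ⊓ V) ⊓ ⨅ (j : Fin n) (_ : (j : ℕ) < c), LinearMap.ker (evC j : F →ₗ[ℂ] H j)
    have hNcmem : ∀ (c : ℕ) (w : F),
        w ∈ Nc c ↔ (w ∈ Mᗮ ∧ w ∈ V) ∧ ∀ j : Fin n, (j : ℕ) < c → w j = 0 := by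
      intro c w
      rw [Submodule.mem_inf, Submodule.mem_inf]
      refine and_congr Iff.rfl ?_
      rw [Submodule.mem_iInf]
      refine forall_congr' fun j => ?_
      rw [Submodule.mem_iInf]
      exact forall_congr' fun hj => LinearMap.mem_ker
    have claim : ∀ m : ℕ, m ≤ n → Module.rank ℂ ↥(Nc (n - m)) ≤
        ∑ j ∈ Finset.univ.filter (fun j : Fin n => n - m ≤ (j : ℕ) ∧ j < i),
          Module.rank ℂ ((LinearMap.range (D j : H j →ₗ[ℂ] H j))ᗮ) := by
      intro m
      induction m with
      | zero =>
        intro _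
        have hbot : Nc (n - 0) ≤ ⊥ := by
          intro w hw
          have hw' := (hNcmem _ w).mp hw
          have : w = 0 := WithLp.ofLp_injective 2 (funext fun j => hw'.2 j (by omega))
          simpa [this] using Submodule.zero_mem (⊥ : Submodule ℂ F)
        calc Module.rank ℂ ↥(Nc (n - 0)) ≤ Module.rank ℂ ↥(⊥ : Submodule ℂ F) :=
              Submodule.rank_mono hbot
          _ = 0 := rank_bot ℂ F
          _ ≤ _ := zero_le
      | succ m ih =>
        intro hm
        have hk : n - (m + 1) < n := by omega
        have hnm : n - m = n - (m + 1) + 1 := by omega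
        set k : ℕ := n - (m + 1) with hkdef
        set kF : Fin n := ⟨k, hk⟩ with hkF
        have hkFval : (kF : ℕ) = k := rfl
        have IH : Module.rank ℂ ↥(Nc (k + 1)) ≤
            ∑ j ∈ Finset.univ.filter (fun j : Fin n => k + 1 ≤ (j : ℕ) ∧ j < i),
              Module.rank ℂ ((LinearMap.range (D j : H j →ₗ[ℂ] H j))ᗮ) := by
          have := ih (by omega)
          rwa [hnm] at this
        by_cases hki : k < (i : ℕ)
        · -- main case: evaluation at kF
          have hmemD : ∀ x : ↥(Nc k), evC kF (x : F) ∈ (LinearMap.range (D kF : H kF →ₗ[ℂ] H kF))ᗮ := by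
            intro x
            have hx := (hNcmem k (x : F)).mp x.2
            rw [hevC]
            exact hkey (x : F) hx.1.1 hx.1.2 kF (by rwa [Fin.lt_def])
              (fun j hj => hx.2 j (by rwa [Fin.lt_def] at hj))
          let gbar : ↥(Nc k) →ₗ[ℂ] ↥((LinearMap.range (D kF : H kF →ₗ[ℂ] H kF))ᗮ) :=
            LinearMap.codRestrict _ ((evC kF : F →ₗ[ℂ] H kF).comp (Nc k).subtype) hmemD
          have hNsub : Nc (k + 1) ≤ Nc k := by
            intro w hw
            have hx := (hNcmem (k + 1) w).mp hw
            exact (hNcmem k w).mpr ⟨hx.1, fun j hj => hx.2 j (by omega)⟩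
          have hkerle : LinearMap.ker gbar ≤ (Nc (k + 1)).comap (Nc k).subtype := by
            intro x hx
            rw [Submodule.mem_comap]
            have hxm := (hNcmem k ((x : F))).mp x.2
            refine (hNcmem (k + 1) _).mpr ⟨hxm.1, fun j hj => ?_⟩
            rcases Nat.lt_or_ge (j : ℕ) k with hj' | hj'
            · exact hxm.2 j hj'
            · have hjk : j = kF := Fin.ext (by omega)
              subst hjk
              rw [LinearMap.mem_ker] at hx
              exact congrArg Subtype.val hx
          have hker2 : Module.rank ℂ ↥(LinearMap.ker gbar) ≤ Module.rank ℂ ↥(Nc (k + 1)) :=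
            le_of_le_of_eq (Submodule.rank_mono hkerle)
              (Submodule.comapSubtypeEquivOfLe hNsub).rank_eq
          have hins : Finset.univ.filter (fun j : Fin n => k ≤ (j : ℕ) ∧ j < i) =
              insert kF (Finset.univ.filter (fun j : Fin n => k + 1 ≤ (j : ℕ) ∧ j < i)) := by
            ext j
            simp only [Finset.mem_filter, Finset.mem_insert, Finset.mem_univ, true_and,
              Fin.lt_def, Fin.ext_iff]
            omega
          have hnotmem : kF ∉ Finset.univ.filter
              (fun j : Fin n => k + 1 ≤ (j : ℕ) ∧ j < i) := by
            simp only [Finset.mem_filter, Finset.mem_univ, true_and, Fin.lt_def]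
            omega
          calc Module.rank ℂ ↥(Nc k)
              = Module.rank ℂ ↥(LinearMap.range gbar) + Module.rank ℂ ↥(LinearMap.ker gbar) :=
                (gbar.rank_range_add_rank_ker).symm
            _ ≤ Module.rank ℂ ((LinearMap.range (D kF : H kF →ₗ[ℂ] H kF))ᗮ) + Module.rank ℂ ↥(Nc (k + 1)) :=
                add_le_add (Submodule.rank_le _) hker2
            _ ≤ Module.rank ℂ ((LinearMap.range (D kF : H kF →ₗ[ℂ] H kF))ᗮ) +
                ∑ j ∈ Finset.univ.filter (fun j : Fin n => k + 1 ≤ (j : ℕ) ∧ j < i),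
                  Module.rank ℂ ((LinearMap.range (D j : H j →ₗ[ℂ] H j))ᗮ) := add_le_add_right IH _
            _ = ∑ j ∈ Finset.univ.filter (fun j : Fin n => k ≤ (j : ℕ) ∧ j < i),
                  Module.rank ℂ ((LinearMap.range (D j : H j →ₗ[ℂ] H j))ᗮ) := by
                rw [hins, Finset.sum_insert hnotmem]
        · -- degenerate case: i ≤ k
          have hsub : Nc k ≤ Nc (k + 1) := by
            intro w hw
            have hx := (hNcmem k w).mp hw
            refine (hNcmem (k + 1) w).mpr ⟨hx.1, fun j hj => ?_⟩
            rcases Nat.lt_or_ge (j : ℕ) k with hj' | hj'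
            · exact hx.2 j hj'
            · have hik : i ≤ j := by
                rw [Fin.le_def]
                omega
              exact (hVmem w).mp hx.1.2 j hik
          have hfil : Finset.univ.filter (fun j : Fin n => k ≤ (j : ℕ) ∧ j < i) =
              Finset.univ.filter (fun j : Fin n => k + 1 ≤ (j : ℕ) ∧ j < i) := by
            ext j
            simp only [Finset.mem_filter, Finset.mem_univ, true_and, Fin.lt_def]
            omega
          rw [hfil]
          exact le_trans (Submodule.rank_mono hsub) IH
    -- conclude
    have hN0 : Nc 0 = Mᗮ ⊓ V := by
      ext w
      rw [hNcmem, Submodule.mem_inf]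
      exact ⟨fun h => h.1, fun h => ⟨h, fun j hj => absurd hj (by omega)⟩⟩
    have hfin := claim n le_rfl
    rw [Nat.sub_self, hN0] at hfin
    have hfil : Finset.univ.filter (fun j : Fin n => 0 ≤ (j : ℕ) ∧ j < i) =
        Finset.univ.filter (fun j : Fin n => j < i) := by
      ext j
      simp
    rw [hfil] at hfin
    exact le_trans rank1 hfin
end

section
/- Let D₁ ∈ B(H₁), D₂ ∈ B(H₂) on Hilbert spaces with D₁ left-Fredholm (α(D₁) < ∞ and R(D₁) closed) and D₂ left-Fredholm, and suppose α(D₁) + α(D₂) ≤ β(D₁) + β(D₂) (as extended naturals). Then there exists A ∈ B(H₂, H₁) such that the operator matrix [[D₁, A],[0, D₂]] is left Weyl on H₁ ⊕ H₂, i.e. left-Fredholm with index ≤ 0. -/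
universe u v

/-- A product submodule is linearly equivalent to the product of the submodules. -/
def submoduleProdEquiv {R : Type*} {M : Type u} {N : Type v} [Semiring R]
    [AddCommMonoid M] [AddCommMonoid N] [Module R M] [Module R N]
    (p : Submodule R M) (q : Submodule R N) : (p.prod q) ≃ₗ[R] p × q where
  toFun x := (⟨x.1.1, x.2.1⟩, ⟨x.1.2, x.2.2⟩)
  invFun y := ⟨(y.1.1, y.2.1), ⟨y.1.2, y.2.2⟩⟩
  map_add' _ _ := rfl
  map_smul' _ _ := rfl
  left_inv _ := rfl
  right_inv _ := rfl

/-- The quotient by a product submodule is the product of the quotients. -/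
noncomputable def quotProdEquiv {R : Type*} {M : Type u} {N : Type v} [Ring R]
    [AddCommGroup M] [AddCommGroup N] [Module R M] [Module R N]
    (p : Submodule R M) (q : Submodule R N) :
    ((M × N) ⧸ (p.prod q)) ≃ₗ[R] (M ⧸ p) × (N ⧸ q) := by
  have hker : LinearMap.ker (p.mkQ.prodMap q.mkQ) = p.prod q := by
    rw [LinearMap.ker_prodMap, Submodule.ker_mkQ, Submodule.ker_mkQ]
  have hsurj : Function.Surjective (p.mkQ.prodMap q.mkQ) := by
    rw [LinearMap.coe_prodMap]
    exact (p.mkQ_surjective.prodMap q.mkQ_surjective)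
  exact (Submodule.quotEquivOfEq _ _ hker.symm).trans
    (LinearMap.quotKerEquivOfSurjective _ hsurj)

variable {H₁ : Type u} {H₂ : Type v} [NormedAddCommGroup H₁] [InnerProductSpace ℂ H₁]
  [CompleteSpace H₁] [NormedAddCommGroup H₂] [InnerProductSpace ℂ H₂] [CompleteSpace H₂]

/-- If `D₁` and `D₂` are left-Fredholm and `α(D₁) + α(D₂) ≤ β(D₁) + β(D₂)`, then some
completion `[[D₁, A],[0, D₂]]` is left Weyl (left-Fredholm with index `≤ 0`). -/
theorem stmt19 (D₁ : H₁ →L[ℂ] H₁) (D₂ : H₂ →L[ℂ] H₂)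
    (hf1 : Module.rank ℂ (LinearMap.ker (D₁ : H₁ →ₗ[ℂ] H₁)) < Cardinal.aleph0 ∧
      IsClosed (LinearMap.range (D₁ : H₁ →ₗ[ℂ] H₁) : Set H₁))
    (hf2 : Module.rank ℂ (LinearMap.ker (D₂ : H₂ →ₗ[ℂ] H₂)) < Cardinal.aleph0 ∧
      IsClosed (LinearMap.range (D₂ : H₂ →ₗ[ℂ] H₂) : Set H₂))
    (hind : Cardinal.lift.{v} (Module.rank ℂ (LinearMap.ker (D₁ : H₁ →ₗ[ℂ] H₁))) +
        Cardinal.lift.{u} (Module.rank ℂ (LinearMap.ker (D₂ : H₂ →ₗ[ℂ] H₂))) ≤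
      Cardinal.lift.{v} (Module.rank ℂ ((LinearMap.range (D₁ : H₁ →ₗ[ℂ] H₁))ᗮ)) +
        Cardinal.lift.{u} (Module.rank ℂ ((LinearMap.range (D₂ : H₂ →ₗ[ℂ] H₂))ᗮ))) :
    ∃ A : H₂ →L[ℂ] H₁,
      Module.rank ℂ (LinearMap.ker
          (upperTriangular D₁ D₂ A : (H₁ × H₂) →ₗ[ℂ] (H₁ × H₂))) < Cardinal.aleph0 ∧
      IsClosed (LinearMap.range
          (upperTriangular D₁ D₂ A : (H₁ × H₂) →ₗ[ℂ] (H₁ × H₂)) : Set (H₁ × H₂)) ∧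
      Module.rank ℂ (LinearMap.ker
          (upperTriangular D₁ D₂ A : (H₁ × H₂) →ₗ[ℂ] (H₁ × H₂))) ≤
        Module.rank ℂ ((H₁ × H₂) ⧸ LinearMap.range
          (upperTriangular D₁ D₂ A : (H₁ × H₂) →ₗ[ℂ] (H₁ × H₂))) := by
  refine ⟨0, ?_⟩
  -- with `A = 0`, the matrix is the diagonal operator `D₁ ⊕ D₂`
  have hT : (upperTriangular D₁ D₂ 0 : (H₁ × H₂) →ₗ[ℂ] (H₁ × H₂)) =
      (D₁ : H₁ →ₗ[ℂ] H₁).prodMap (D₂ : H₂ →ₗ[ℂ] H₂) := by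
    ext x <;> simp [upperTriangular]
  have hker : LinearMap.ker (upperTriangular D₁ D₂ 0 : (H₁ × H₂) →ₗ[ℂ] (H₁ × H₂)) =
      (LinearMap.ker (D₁ : H₁ →ₗ[ℂ] H₁)).prod (LinearMap.ker (D₂ : H₂ →ₗ[ℂ] H₂)) := by
    have h := LinearMap.ker_prodMap (D₁ : H₁ →ₗ[ℂ] H₁) (D₂ : H₂ →ₗ[ℂ] H₂)
    rw [← hT] at h
    exact h
  have hrange : LinearMap.range (upperTriangular D₁ D₂ 0 : (H₁ × H₂) →ₗ[ℂ] (H₁ × H₂)) =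
      (LinearMap.range (D₁ : H₁ →ₗ[ℂ] H₁)).prod (LinearMap.range (D₂ : H₂ →ₗ[ℂ] H₂)) := by
    ext ⟨x, y⟩
    constructor
    · rintro ⟨⟨a, b⟩, h⟩
      simp only [upperTriangular, ContinuousLinearMap.prod_apply,
        ContinuousLinearMap.add_apply, ContinuousLinearMap.coe_comp',
        Function.comp_apply, ContinuousLinearMap.coe_fst',
        ContinuousLinearMap.coe_snd', ContinuousLinearMap.zero_apply,
        add_zero, Prod.mk.injEq, ContinuousLinearMap.coe_coe] at h
      exact ⟨⟨a, h.1⟩, ⟨b, h.2⟩⟩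
    · rintro ⟨⟨a, ha⟩, ⟨b, hb⟩⟩
      exact ⟨(a, b), by simp only [ContinuousLinearMap.coe_coe] at ha hb; simp [upperTriangular, ha, hb]⟩
  -- kernel rank
  have hkrank : Module.rank ℂ (LinearMap.ker (upperTriangular D₁ D₂ 0 : (H₁ × H₂) →ₗ[ℂ] (H₁ × H₂))) =
      Cardinal.lift.{v} (Module.rank ℂ (LinearMap.ker (D₁ : H₁ →ₗ[ℂ] H₁))) +
        Cardinal.lift.{u} (Module.rank ℂ (LinearMap.ker (D₂ : H₂ →ₗ[ℂ] H₂))) := by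
    rw [hker, (submoduleProdEquiv _ _).rank_eq, rank_prod]
  refine ⟨?_, ?_, ?_⟩
  · rw [hkrank]
    exact Cardinal.add_lt_aleph0 (Cardinal.lift_lt_aleph0.2 hf1.1)
      (Cardinal.lift_lt_aleph0.2 hf2.1)
  · rw [hrange]
    have : ((LinearMap.range (D₁ : H₁ →ₗ[ℂ] H₁)).prod (LinearMap.range (D₂ : H₂ →ₗ[ℂ] H₂)) : Set (H₁ × H₂)) =
        (LinearMap.range (D₁ : H₁ →ₗ[ℂ] H₁) : Set H₁) ×ˢ (LinearMap.range (D₂ : H₂ →ₗ[ℂ] H₂) : Set H₂) := rfl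
    rw [this]
    exact hf1.2.prod hf2.2
  · rw [hkrank, hrange]
    have e : ((H₁ × H₂) ⧸ (LinearMap.range (D₁ : H₁ →ₗ[ℂ] H₁)).prod (LinearMap.range (D₂ : H₂ →ₗ[ℂ] H₂))) ≃ₗ[ℂ]
        (H₁ ⧸ LinearMap.range (D₁ : H₁ →ₗ[ℂ] H₁)) × (H₂ ⧸ LinearMap.range (D₂ : H₂ →ₗ[ℂ] H₂)) := quotProdEquiv _ _
    rw [e.rank_eq, rank_prod]
    haveI : CompleteSpace (LinearMap.range (D₁ : H₁ →ₗ[ℂ] H₁) : Submodule ℂ H₁) :=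
      hf1.2.completeSpace_coe
    haveI : CompleteSpace (LinearMap.range (D₂ : H₂ →ₗ[ℂ] H₂) : Submodule ℂ H₂) :=
      hf2.2.completeSpace_coe
    have e1 : (H₁ ⧸ (LinearMap.range (D₁ : H₁ →ₗ[ℂ] H₁) : Submodule ℂ H₁)) ≃ₗ[ℂ]
        ((LinearMap.range (D₁ : H₁ →ₗ[ℂ] H₁) : Submodule ℂ H₁)ᗮ : Submodule ℂ H₁) :=
      Submodule.quotientEquivOfIsCompl _ _
        (Submodule.isCompl_orthogonal_of_hasOrthogonalProjection)
    have e2 : (H₂ ⧸ (LinearMap.range (D₂ : H₂ →ₗ[ℂ] H₂) : Submodule ℂ H₂)) ≃ₗ[ℂ]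
        ((LinearMap.range (D₂ : H₂ →ₗ[ℂ] H₂) : Submodule ℂ H₂)ᗮ : Submodule ℂ H₂) :=
      Submodule.quotientEquivOfIsCompl _ _
        (Submodule.isCompl_orthogonal_of_hasOrthogonalProjection)
    rw [e1.rank_eq, e2.rank_eq]
    exact hind
end
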